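/- For every integer m ≥ 2, a word w of length f_m satisfies that ww is a factor of the Fibonacci word F if and only if either (i) w = K_{m−1}[i, f_{m−1}] · K_{m−2} · K_{m−1}[1, i−1] for some integer i with 2 ≤ i ≤ f_{m−1}, or (ii) w = K_m[i, f_m] · K_{m−1} · K_m[1, i − f_{m−1} − 1] for some integer i with f_{m−1}+1 ≤ i ≤ f_m+1. In particular, there are exactly f_m distinct squares of length 2f_m occurring in F. -/

import Mathlib

/-- Fibonacci numbers: `fn 0 = 1`, `fn 1 = 2`, `fn (m+2) = fn (m+1) + fn m`
(so `fn m` is the paper's `f_m`; also `f_{m-1} = Nat.fib (m+1)` etc.). -/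
def fn (m : ℕ) : ℕ := Nat.fib (m + 2)

/-- Finite Fibonacci words `Fw m = σ^m(a)` for the morphism σ(a)=ab, σ(b)=a,
with `a := false`, `b := true`; equivalently `Fw (m+2) = Fw (m+1) ++ Fw m`. -/
def Fw : ℕ → List Bool
  | 0 => [false]
  | 1 => [false, true]
  | m + 2 => Fw (m + 1) ++ Fw m

/-- The infinite Fibonacci word (0-indexed): the fixed point of σ beginning with `a`. -/
def fibWord (i : ℕ) : Bool := (Fw (i + 1)).getD i false

/-- `fFactor i n = F[i;n]`, the factor of length `n` of the Fibonacci word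
beginning at (1-indexed) position `i`. -/
def fFactor (i n : ℕ) : List Bool := (List.range n).map fun t => fibWord (i - 1 + t)

/-- `w` occurs as a factor of the infinite Fibonacci word. -/
def IsFactorF (w : List Bool) : Prop := ∃ i : ℕ, 1 ≤ i ∧ w = fFactor i w.length

/-- `D2 i n`: the number of distinct squares occurring as factors of `F[i;n]`. -/
noncomputable def D2 (i n : ℕ) : ℕ :=
  {w : List Bool | w ≠ [] ∧ (w ++ w) <:+: fFactor i n}.ncard

/-- The kernel word `K_m` (`m ≥ 0`): the last letter of `F_{m+1}` followed by
`F_m` with its last letter removed. -/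
def kerW (m : ℕ) : List Bool := (Fw (m + 1)).getLast! :: (Fw m).dropLast

/-- `sliceF u i j = u[i,j]`, the (1-indexed) factor of `u` from position `i` to `j`,
with `u[i,i-1] = ε`. -/
def sliceF (u : List Bool) (i j : ℕ) : List Bool := (u.drop (i - 1)).take (j + 1 - i)

/- ### basic fn facts -/

lemma fn_add_two (m : ℕ) : fn (m+2) = fn (m+1) + fn m := by
  exact (Nat.fib_add_two (n := m+2)).trans (Nat.add_comm _ _)

lemma fn_pos (m : ℕ) : 0 < fn m := by
  exact Nat.fib_pos.2 (by omega)

lemma fn_ge : ∀ m, m + 1 ≤ fn m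
  | 0 => by decide
  | 1 => by decide
  | (m+2) => by
      have h1 := fn_ge (m+1)
      have h2 := fn_pos m
      rw [fn_add_two]; omega

lemma fn_lt_succ (m : ℕ) : fn m < fn (m+1) := by
  match m with
  | 0 => decide
  | (k+1) => rw [fn_add_two]; have := fn_pos k; omega

lemma fn_mono : Monotone fn := monotone_nat_of_le_succ (fun n => (fn_lt_succ n).le)

lemma fn_strictMono : StrictMono fn := strictMono_nat_of_lt_succ fn_lt_succ

/- ### basic Fw facts -/

lemma Fw_two_step (m : ℕ) : Fw (m+2) = Fw (m+1) ++ Fw m := rfl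

lemma len_Fw : ∀ m, (Fw m).length = fn m
  | 0 => by decide
  | 1 => by decide
  | (m+2) => by
      rw [Fw_two_step, List.length_append, len_Fw (m+1), len_Fw m, fn_add_two]

lemma Fw_ne_nil (m : ℕ) : Fw m ≠ [] := by
  intro h
  have h1 := len_Fw m; have h2 := fn_pos m
  rw [h] at h1; simp at h1; omega

lemma Fw_prefix_succ : ∀ m, Fw m <+: Fw (m+1)
  | 0 => ⟨[true], rfl⟩
  | (m+1) => ⟨Fw m, rfl⟩

lemma Fw_prefix {m n : ℕ} (h : m ≤ n) : Fw m <+: Fw n := by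
  induction n with
  | zero => rw [Nat.le_zero.1 h]
  | succ k ih =>
    rcases Nat.lt_or_ge m (k+1) with h'|h'
    · exact (ih (by omega)).trans (Fw_prefix_succ k)
    · have : m = k + 1 := by omega
      rw [this]

lemma prefix_getD {u v : List Bool} (h : u <+: v) {i : ℕ} (hi : i < u.length) :
    u.getD i false = v.getD i false := by
  rw [List.getD_eq_getElem _ _ hi,
      List.getD_eq_getElem _ _ (lt_of_lt_of_le hi h.length_le)]
  exact h.getElem hi

lemma fibWord_eq (N i : ℕ) (hi : i < fn N) : fibWord i = (Fw N).getD i false := by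
  rcases Nat.le_total N (i+1) with h|h
  · exact (prefix_getD (Fw_prefix h) (by rw [len_Fw]; exact hi)).symm
  · exact prefix_getD (Fw_prefix h)
      (by rw [len_Fw]; have := fn_ge (i+1); omega)

/- ### fFactor helpers -/

lemma length_fFactor (i n : ℕ) : (fFactor i n).length = n := by simp [fFactor]

lemma getD_fFactor (i n t : ℕ) (ht : t < n) :
    (fFactor i n).getD t false = fibWord (i - 1 + t) := by
  rw [List.getD_eq_getElem _ _ (by simpa [length_fFactor] using ht)]
  simp [fFactor]

lemma fFactor_ext {w : List Bool} {i n : ℕ} (hw : w.length = n)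
    (H : ∀ t, t < n → w.getD t false = fibWord (i - 1 + t)) : w = fFactor i n := by
  apply List.ext_getElem (by rw [hw, length_fFactor])
  intro t h1 h2
  have ht : t < n := by rwa [hw] at h1
  have h3 := H t ht
  rw [List.getD_eq_getElem _ _ h1] at h3
  have h4 := getD_fFactor i n t ht
  rw [List.getD_eq_getElem _ _ h2] at h4
  rw [h3, h4]

/- ### the swap structure -/

def Pw : ℕ → List Bool
  | 0 => [false]
  | k+1 => Fw (k+1) ++ Pw k

def xw (k : ℕ) : Bool := decide (k % 2 = 0)

lemma xw_succ (k : ℕ) : xw (k+1) = !xw k := by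
  rcases Nat.mod_two_eq_zero_or_one k with h|h <;>
    simp [xw, Nat.add_mod, h]

lemma len_Pw : ∀ k, (Pw k).length + 2 = fn (k+2)
  | 0 => by decide
  | (k+1) => by
      show (Fw (k+1) ++ Pw k).length + 2 = fn (k+3)
      have h : fn (k+3) = fn (k+2) + fn (k+1) := fn_add_two (k+1)
      rw [List.length_append, len_Fw]
      have := len_Pw k; omega

lemma swap : ∀ k, Fw (k+1) ++ Fw k = Pw k ++ [xw k, !xw k] ∧
    Fw k ++ Fw (k+1) = Pw k ++ [!xw k, xw k]
  | 0 => by constructor <;> decide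
  | (k+1) => by
      obtain ⟨h1, h2⟩ := swap k
      constructor
      · show (Fw (k+1) ++ Fw k) ++ Fw (k+1) = (Fw (k+1) ++ Pw k) ++ [xw (k+1), !xw (k+1)]
        rw [List.append_assoc, h2, xw_succ]
        simp
      · show Fw (k+1) ++ (Fw (k+1) ++ Fw k) = (Fw (k+1) ++ Pw k) ++ [!xw (k+1), xw (k+1)]
        rw [h1, xw_succ]
        simp

/- ### agreement lemmas -/

lemma AG1 (k j : ℕ) (hj : j + 2 < fn (k+2)) : fibWord j = fibWord (j + fn (k+1)) := by
  have f3 : fn (k+3) = fn (k+2) + fn (k+1) := fn_add_two (k+1)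
  have hPl : (Pw k).length + 2 = fn (k+2) := len_Pw k
  have hjP : j < (Pw k).length := by omega
  have h1 : fibWord j = (Pw k).getD j false := by
    rw [fibWord_eq (k+2) j (by omega)]
    rw [show Fw (k+2) = Pw k ++ [xw k, !xw k] from (swap k).1]
    exact List.getD_append _ _ _ _ hjP
  have h2 : fibWord (j + fn (k+1)) = (Pw k).getD j false := by
    rw [fibWord_eq (k+3) _ (by omega)]
    have e : Fw (k+3) = Fw (k+1) ++ (Pw k ++ [!xw k, xw k]) := by
      show Fw (k+2) ++ Fw (k+1) = _
      rw [Fw_two_step, List.append_assoc, (swap k).2]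
    rw [e, List.getD_append_right _ _ _ _ (by rw [len_Fw]; omega)]
    rw [len_Fw, Nat.add_sub_cancel]
    exact List.getD_append _ _ _ _ hjP
  rw [h1, h2]

lemma AG2 (k j : ℕ) (hj1 : fn (k+2) ≤ j) (hj2 : j + 2 < fn (k+2) + fn (k+3)) :
    fibWord j = fibWord (j + fn (k+1)) := by
  have f3 : fn (k+3) = fn (k+2) + fn (k+1) := fn_add_two (k+1)
  have f4 : fn (k+4) = fn (k+3) + fn (k+2) := fn_add_two (k+2)
  have f5 : fn (k+5) = fn (k+4) + fn (k+3) := fn_add_two (k+3)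
  set r := j - fn (k+2) with hr
  have hPl : (Pw (k+1)).length + 2 = fn (k+3) := len_Pw (k+1)
  have hrP : r < (Pw (k+1)).length := by omega
  have h1 : fibWord j = (Pw (k+1)).getD r false := by
    rw [fibWord_eq (k+4) _ (by omega)]
    have e : Fw (k+4) = Fw (k+2) ++ (Pw (k+1) ++ [!xw (k+1), xw (k+1)]) := by
      show Fw (k+3) ++ Fw (k+2) = _
      rw [Fw_two_step, List.append_assoc]
      congr 1
      exact (swap (k+1)).2
    rw [e, List.getD_append_right _ _ _ _ (by rw [len_Fw]; omega)]
    rw [len_Fw, ← hr]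
    exact List.getD_append _ _ _ _ hrP
  have h2 : fibWord (j + fn (k+1)) = (Pw (k+1)).getD r false := by
    have hidx : j + fn (k+1) = fn (k+3) + r := by omega
    rw [fibWord_eq (k+5) _ (by omega)]
    have e : Fw (k+5) = Fw (k+3) ++ (Fw (k+2) ++ Fw (k+3)) := by
      show Fw (k+4) ++ Fw (k+3) = _
      rw [Fw_two_step, List.append_assoc]
    rw [e, hidx, List.getD_append_right _ _ _ _ (by rw [len_Fw]; omega)]
    rw [len_Fw, Nat.add_sub_cancel_left]
    have hpre : Pw (k+1) <+: Fw (k+2) ++ Fw (k+3) := by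
      have p1 : Pw (k+1) <+: Fw (k+2) ++ Fw (k+1) :=
        ⟨[xw (k+1), !xw (k+1)], ((swap (k+1)).1).symm⟩
      obtain ⟨t, ht⟩ := Fw_prefix (show k+1 ≤ k+3 by omega)
      exact p1.trans ⟨t, by rw [← ht, List.append_assoc]⟩
    rw [← prefix_getD hpre hrP]
  rw [h1, h2]
/- ### periodic zones -/

lemma BASE (m s : ℕ) (hs : s < fn m) :
    fibWord (fn (m+1) + s) = (Fw m).getD s false := by
  have f2 : fn (m+2) = fn (m+1) + fn m := fn_add_two m
  have f3 : fn (m+3) = fn (m+2) + fn (m+1) := fn_add_two (m+1)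
  rw [fibWord_eq (m+3) _ (by omega)]
  have e : Fw (m+3) = Fw (m+1) ++ (Fw m ++ Fw (m+1)) := by
    show Fw (m+2) ++ Fw (m+1) = _
    rw [Fw_two_step, List.append_assoc]
  rw [e, List.getD_append_right _ _ _ _ (by rw [len_Fw]; omega)]
  rw [len_Fw, Nat.add_sub_cancel_left]
  exact List.getD_append _ _ _ _ (by rw [len_Fw]; omega)

lemma PER1 (m : ℕ) (hm : 1 ≤ m) : ∀ s, s + 2 < fn (m+1) →
    fibWord s = (Fw m).getD (s % fn m) false := by
  intro s
  induction s using Nat.strong_induction_on with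
  | _ s ih =>
    intro hs
    rcases Nat.lt_or_ge s (fn m) with h|h
    · rw [Nat.mod_eq_of_lt h]
      exact fibWord_eq m s h
    · obtain ⟨k, rfl⟩ : ∃ k, m = k + 1 := ⟨m - 1, by omega⟩
      have hs' : s + 2 < fn (k+2) := hs
      have h1 : fibWord (s - fn (k+1)) = fibWord (s - fn (k+1) + fn (k+1)) :=
        AG1 k (s - fn (k+1)) (by omega)
      rw [Nat.sub_add_cancel h] at h1
      rw [← h1, ih (s - fn (k+1)) (by have := fn_pos (k+1); omega) (by omega),
        Nat.mod_eq_sub_mod h]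

lemma PER2 (m : ℕ) (hm : 1 ≤ m) : ∀ s, s + 2 < fn (m+2) + fn m →
    fibWord (fn (m+1) + s) = (Fw m).getD (s % fn m) false := by
  intro s
  induction s using Nat.strong_induction_on with
  | _ s ih =>
    intro hs
    rcases Nat.lt_or_ge s (fn m) with h|h
    · rw [Nat.mod_eq_of_lt h]
      exact BASE m s h
    · obtain ⟨k, rfl⟩ : ∃ k, m = k + 1 := ⟨m - 1, by omega⟩
      have hs' : s + 2 < fn (k+3) + fn (k+1) := hs
      have h1 : fibWord (fn (k+2) + (s - fn (k+1))) =
          fibWord (fn (k+2) + (s - fn (k+1)) + fn (k+1)) :=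
        AG2 k _ (by omega) (by omega)
      have e : fn (k+2) + (s - fn (k+1)) + fn (k+1) = fn (k+2) + s := by omega
      rw [e] at h1
      rw [← h1, ih (s - fn (k+1)) (by have := fn_pos (k+1); omega) (by omega),
        Nat.mod_eq_sub_mod h]

/- ### last two letters, mismatch positions -/

lemma lastTwo (k : ℕ) :
    (Fw (k+2)).getD (fn (k+2) - 2) false = xw k ∧
    (Fw (k+2)).getD (fn (k+2) - 1) false = !xw k := by
  have hPl : (Pw k).length + 2 = fn (k+2) := len_Pw k
  have e : Fw (k+2) = Pw k ++ [xw k, !xw k] := (swap k).1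
  constructor
  · rw [e, List.getD_append_right _ _ _ _ (by omega),
      show fn (k+2) - 2 - (Pw k).length = 0 by omega]
    rfl
  · rw [e, List.getD_append_right _ _ _ _ (by omega),
      show fn (k+2) - 1 - (Pw k).length = 1 by omega]
    rfl

lemma fibWord_lastTwo (k : ℕ) :
    fibWord (fn (k+2) - 2) = xw k ∧ fibWord (fn (k+2) - 1) = !xw k := by
  have h3 : 3 ≤ fn (k+2) := by
    have : fn 2 ≤ fn (k+2) := fn_mono (by omega)
    have : fn 2 = 3 := by decide
    omega
  constructor
  · rw [fibWord_eq (k+2) _ (by omega)]; exact (lastTwo k).1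
  · rw [fibWord_eq (k+2) _ (by omega)]; exact (lastTwo k).2

/-- mismatch for shift `fn (k+1)` at positions `fn (k+2) - 2` and `fn (k+2) - 1`. -/
lemma MIS1 (k : ℕ) :
    fibWord (fn (k+2) - 2) ≠ fibWord (fn (k+2) - 2 + fn (k+1)) ∧
    fibWord (fn (k+2) - 1) ≠ fibWord (fn (k+2) - 1 + fn (k+1)) := by
  have f3 : fn (k+3) = fn (k+2) + fn (k+1) := fn_add_two (k+1)
  have h3 : 3 ≤ fn (k+2) := by
    have h := fn_mono (show 2 ≤ k+2 by omega)
    have : fn 2 = 3 := by decide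
    omega
  have e1 : fn (k+2) - 2 + fn (k+1) = fn (k+3) - 2 := by omega
  have e2 : fn (k+2) - 1 + fn (k+1) = fn (k+3) - 1 := by omega
  rw [e1, e2, (fibWord_lastTwo k).1, (fibWord_lastTwo k).2,
    (fibWord_lastTwo (k+1)).1, (fibWord_lastTwo (k+1)).2, xw_succ]
  constructor <;> simp

/-- mismatch for shift `fn m` at positions `fn (m+3) - 2` and `fn (m+3) - 1`, `m ≥ 2`. -/
lemma MIS2 (m : ℕ) (hm : 2 ≤ m) :
    fibWord (fn (m+3) - 2) ≠ fibWord (fn (m+3) - 2 + fn m) ∧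
    fibWord (fn (m+3) - 1) ≠ fibWord (fn (m+3) - 1 + fn m) := by
  obtain ⟨k, rfl⟩ : ∃ k, m = k + 2 := ⟨m - 2, by omega⟩
  have f4 : fn (k+5) = fn (k+4) + fn (k+3) := fn_add_two (k+3)
  have h3 : 3 ≤ fn (k+2) := by
    have h := fn_mono (show 2 ≤ k+2 by omega)
    have : fn 2 = 3 := by decide
    omega
  have f6 : fn (k+6) = fn (k+5) + fn (k+4) := fn_add_two (k+4)
  have hmono : fn (k+2) < fn (k+4) := fn_strictMono (by omega)
  have key : ∀ r, r < fn (k+2) →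
      fibWord (fn (k+5) + r) = (Fw (k+2)).getD r false := by
    intro r hr
    rw [fibWord_eq (k+6) (fn (k+5) + r) (by omega)]
    rw [show Fw (k+6) = Fw (k+5) ++ Fw (k+4) from rfl,
      List.getD_append_right _ _ _ _ (by rw [len_Fw]; omega),
      len_Fw, Nat.add_sub_cancel_left]
    exact (prefix_getD (Fw_prefix (by omega)) (by rw [len_Fw]; omega)).symm
  have e1 : fn (k+5) - 2 + fn (k+2) = fn (k+5) + (fn (k+2) - 2) := by omega
  have e2 : fn (k+5) - 1 + fn (k+2) = fn (k+5) + (fn (k+2) - 1) := by omega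
  rw [e1, e2, key _ (by omega), key _ (by omega),
    (fibWord_lastTwo (k+3)).1, (fibWord_lastTwo (k+3)).2,
    (lastTwo k).1, (lastTwo k).2, xw_succ, xw_succ, xw_succ]
  constructor <;> simp
/- ### occurrence reduction -/

lemma fFactor_congr {i i' n : ℕ} (H : ∀ t, t < n → fibWord (i - 1 + t) = fibWord (i' - 1 + t)) :
    fFactor i n = fFactor i' n := by
  simp only [fFactor]
  exact List.map_congr_left (fun t ht => H t (List.mem_range.1 ht))

lemma shiftA (j i n : ℕ) (h1 : fn (j+1) + 1 ≤ i) (h2 : i + n + 1 ≤ fn (j+2)) :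
    fFactor i n = fFactor (i - fn (j+1)) n := by
  apply fFactor_congr
  intro t ht
  have h := AG1 j (i - 1 - fn (j+1) + t) (by omega)
  have e : i - 1 - fn (j+1) + t + fn (j+1) = i - 1 + t := by omega
  rw [e] at h
  have e2 : i - fn (j+1) - 1 + t = i - 1 - fn (j+1) + t := by omega
  rw [e2, ← h]

lemma shiftUp (j i n : ℕ) (h1 : 1 ≤ i) (h2 : i + n < fn (j+3)) :
    fFactor i n = fFactor (i + fn (j+2)) n := by
  apply fFactor_congr
  intro t ht
  have h : fibWord (i - 1 + t) = fibWord (i - 1 + t + fn (j+2)) :=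
    AG1 (j+1) (i - 1 + t) (by show i - 1 + t + 2 < fn (j+3); omega)
  rw [h]
  congr 1
  omega

lemma find_level : ∀ d k i, fn (k+1) < i → i ≤ fn (k+1+d) →
    ∃ j, k ≤ j ∧ fn (j+1) < i ∧ i ≤ fn (j+2) := by
  intro d
  induction d with
  | zero =>
    intro k i h1 h2
    have h2' : i ≤ fn (k+1) := h2
    omega
  | succ d ih =>
    intro k i h1 h2
    rcases le_or_gt i (fn (k+1+d)) with h|h
    · exact ih k i h1 h
    · refine ⟨k+d, by omega, ?_, ?_⟩
      · have e : k+d+1 = k+1+d := by omega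
        rw [e]; exact h
      · have e : k+d+2 = k+1+(d+1) := by omega
        rw [e]; exact h2

lemma find_level' (k i : ℕ) (h1 : fn (k+1) < i) :
    ∃ j, k ≤ j ∧ fn (j+1) < i ∧ i ≤ fn (j+2) := by
  apply find_level i k i h1
  have := fn_ge (k+1+i)
  omega

lemma red (k : ℕ) (n : ℕ) (hn : n + 2 ≤ fn k) : ∀ i, 1 ≤ i →
    ∃ i', 1 ≤ i' ∧ i' ≤ fn (k+1) ∧ fFactor i n = fFactor i' n := by
  intro i
  induction i using Nat.strong_induction_on with
  | _ i ih =>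
    intro hi
    rcases le_or_gt i (fn (k+1)) with h|h
    · exact ⟨i, hi, h, rfl⟩
    · obtain ⟨j, hkj, hj1, hj2⟩ := find_level' k i h
      have hnj : n + 2 ≤ fn j := le_trans hn (fn_mono hkj)
      have f2 : fn (j+2) = fn (j+1) + fn j := fn_add_two j
      have f3 : fn (j+3) = fn (j+2) + fn (j+1) := fn_add_two (j+1)
      have f4 : fn (j+4) = fn (j+3) + fn (j+2) := fn_add_two (j+2)
      have hpos := fn_pos (j+1)
      have hm0 : fn j ≤ fn (j+1) := fn_mono (by omega)
      have hm1 : fn (j+1) ≤ fn (j+2) := fn_mono (by omega)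
      have f23 : fn (j+2+1) = fn (j+3) := rfl
      have f24 : fn (j+2+2) = fn (j+4) := rfl
      have heq : fFactor i n = fFactor (i - fn (j+1)) n := by
        rcases le_or_gt (i + n + 1) (fn (j+2)) with hc|hc
        · exact shiftA j i n (by omega) hc
        · have s1 : fFactor i n = fFactor (i + fn (j+2)) n :=
            shiftUp j i n (by omega) (by omega)
          have s2 : fFactor (i + fn (j+2)) n = fFactor (i + fn (j+2) - fn (j+3)) n := by
            apply shiftA (j+2) (i + fn (j+2)) n (by omega) (by omega)
          rw [s1, s2]
          congr 1
          omega
      obtain ⟨i', hi1, hi2, hi3⟩ := ih (i - fn (j+1)) (by omega) (by omega)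
      exact ⟨i', hi1, hi2, heq.trans hi3⟩

/- ### rotation extensionality -/

lemma ROTX {u w : List Bool} (hu : u ≠ []) (d : ℕ) (hw : w.length = u.length)
    (H : ∀ t, t < u.length → w.getD t false = u.getD ((d + t) % u.length) false) :
    w = u.rotate (d % u.length) := by
  have hn : 0 < u.length := List.length_pos_iff.2 hu
  apply List.ext_getElem (by rw [hw, List.length_rotate])
  intro t h1 h2
  have ht : t < u.length := by rwa [hw] at h1
  have hmod : (d + t) % u.length < u.length := Nat.mod_lt _ hn
  have h3 := H t ht
  rw [List.getD_eq_getElem _ _ h1, List.getD_eq_getElem _ _ hmod] at h3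
  rw [h3, List.getElem_rotate]
  congr 1
  rw [Nat.add_comm t (d % u.length), Nat.mod_add_mod]
/- ### characterization of square factors via rotations -/

lemma rot_getD (u : List Bool) (d t : ℕ) (ht : t < u.length) :
    (u.rotate d).getD t false = u.getD ((d + t) % u.length) false := by
  have hn : 0 < u.length := by omega
  have h1 : t < (u.rotate d).length := by rwa [List.length_rotate]
  rw [List.getD_eq_getElem _ _ h1, List.getD_eq_getElem _ _ (Nat.mod_lt _ hn),
    List.getElem_rotate]
  congr 1
  rw [Nat.add_comm]

lemma sq_rot_isFactor (m : ℕ) (hm : 2 ≤ m) (d : ℕ) (hd : d < fn m) :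
    IsFactorF ((Fw m).rotate d ++ (Fw m).rotate d) := by
  set u := Fw m with hu
  have hlen : u.length = fn m := len_Fw m
  have hrl : (u.rotate d).length = fn m := by rw [List.length_rotate, hlen]
  have f2 : fn (m+2) = fn (m+1) + fn m := fn_add_two m
  have hlt : fn m < fn (m+1) := fn_lt_succ m
  have hpos : 0 < fn m := fn_pos m
  refine ⟨fn (m+1) + d + 1, by omega, ?_⟩
  have hL : (u.rotate d ++ u.rotate d).length = 2 * fn m := by
    rw [List.length_append, hrl]; omega
  rw [hL]
  apply fFactor_ext hL
  intro t ht
  have e1 : fn (m+1) + d + 1 - 1 + t = fn (m+1) + (d + t) := by omega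
  rw [e1, PER2 m (by omega) (d + t) (by omega)]
  rcases lt_or_ge t (fn m) with h|h
  · rw [List.getD_append _ _ _ _ (by omega), rot_getD u d t (by omega), hlen]
  · rw [List.getD_append_right _ _ _ _ (by omega), hrl,
      rot_getD u d (t - fn m) (by omega), hlen]
    congr 1
    have : fn m ≤ d + t := by omega
    rw [Nat.mod_eq_sub_mod this]
    congr 1
    omega

lemma isFactor_sq_rot (m : ℕ) (hm : 2 ≤ m) (w : List Bool) (hw : w.length = fn m)
    (hf : IsFactorF (w ++ w)) : ∃ d, d < fn m ∧ w = (Fw m).rotate d := by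
  obtain ⟨M, rfl⟩ : ∃ M, m = M + 2 := ⟨m - 2, by omega⟩
  set m := M + 2
  have hlen2 : (w ++ w).length = 2 * fn m := by rw [List.length_append, hw]; omega
  have f2 : fn (m+2) = fn (m+1) + fn m := fn_add_two m
  have f3 : fn (m+3) = fn (m+2) + fn (m+1) := fn_add_two (m+1)
  have f1 : fn (m+1) = fn m + fn (M+1) := fn_add_two (M+1)
  have hM1 : 2 ≤ fn (M+1) := by
    have : fn 1 = 2 := by decide
    have := fn_mono (show 1 ≤ M+1 by omega)
    omega
  have hpos : 0 < fn m := fn_pos m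
  have h3 : 3 ≤ fn m := by
    have : fn 2 = 3 := by decide
    have := fn_mono (show 2 ≤ m by omega)
    omega
  obtain ⟨i, hi1, hi2⟩ := hf
  rw [hlen2] at hi2
  obtain ⟨i', hi'1, hi'2, heq⟩ := red (m+2) (2 * fn m) (by omega) i hi1
  rw [heq] at hi2
  set i0 := i' - 1 with hi0
  have hi0lt : i0 < fn (m+3) := by
    have e : fn (m+2+1) = fn (m+3) := rfl
    omega
  have P : ∀ t, t < 2 * fn m → (w ++ w).getD t false = fibWord (i0 + t) := by
    intro t ht
    rw [hi2, getD_fFactor _ _ _ ht]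
  have pw : ∀ t, t < fn m → w.getD t false = fibWord (i0 + t) := by
    intro t ht
    rw [← P t (by omega), List.getD_append _ _ _ _ (by omega)]
  have pw2 : ∀ t, t < fn m → fibWord (i0 + t + fn m) = fibWord (i0 + t) := by
    intro t ht
    have h1 := P (t + fn m) (by omega)
    rw [List.getD_append_right _ _ _ _ (by omega), hw, Nat.add_sub_cancel] at h1
    have h2 := pw t ht
    rw [show i0 + (t + fn m) = i0 + t + fn m from by omega] at h1
    rw [← h1, ← h2]
  have hune : Fw m ≠ [] := Fw_ne_nil m
  rcases le_or_gt (i0 + fn m + 2) (fn (m+1)) with hr1|hx1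
  · -- run 1
    refine ⟨i0 % fn m, Nat.mod_lt _ hpos, ?_⟩
    have := ROTX hune i0 (by rw [hw, len_Fw]) ?_
    · rwa [len_Fw] at this
    · intro t ht
      rw [len_Fw] at ht ⊢
      rw [pw t ht, PER1 m (by omega) (i0 + t) (by omega)]
  rcases lt_or_ge i0 (fn (m+1)) with hx2|hr2
  · -- bad region A : mismatch with MIS1 (M+1)
    exfalso
    have mis := MIS1 (M+1)
    have em : fn (M+1+2) = fn (m+1) := rfl
    have em2 : fn (M+1+1) = fn m := rfl
    rw [em, em2] at mis
    rcases le_or_gt (i0 + 2) (fn (m+1)) with hs|hs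
    · have ht : fn (m+1) - 2 - i0 < fn m := by omega
      have := pw2 (fn (m+1) - 2 - i0) ht
      rw [show i0 + (fn (m+1) - 2 - i0) = fn (m+1) - 2 by omega] at this
      exact mis.1 this.symm
    · have hi0e : i0 = fn (m+1) - 1 := by omega
      have := pw2 0 (by omega)
      rw [Nat.add_zero, hi0e] at this
      exact mis.2 this.symm
  rcases le_or_gt (i0 + fn m + 2) (fn (m+3)) with hr3|hx3
  · -- run 2
    refine ⟨(i0 - fn (m+1)) % fn m, Nat.mod_lt _ hpos, ?_⟩
    have := ROTX hune (i0 - fn (m+1)) (by rw [hw, len_Fw]) ?_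
    · rwa [len_Fw] at this
    · intro t ht
      rw [len_Fw] at ht ⊢
      rw [pw t ht, show i0 + t = fn (m+1) + (i0 - fn (m+1) + t) by omega,
        PER2 m (by omega) (i0 - fn (m+1) + t) (by omega)]
  · -- bad region B : mismatch with MIS2
    exfalso
    have mis := MIS2 m (by omega)
    rcases le_or_gt (i0 + 2) (fn (m+3)) with hs|hs
    · have ht : fn (m+3) - 2 - i0 < fn m := by omega
      have := pw2 (fn (m+3) - 2 - i0) ht
      rw [show i0 + (fn (m+3) - 2 - i0) = fn (m+3) - 2 by omega] at this
      exact mis.1 this.symm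
    · have hi0e : i0 = fn (m+3) - 1 := by omega
      have := pw2 0 (by omega)
      rw [Nat.add_zero, hi0e] at this
      exact mis.2 this.symm

lemma rot_char (m : ℕ) (hm : 2 ≤ m) (w : List Bool) (hw : w.length = fn m) :
    IsFactorF (w ++ w) ↔ ∃ d, d < fn m ∧ w = (Fw m).rotate d := by
  constructor
  · exact isFactor_sq_rot m hm w hw
  · rintro ⟨d, hd, rfl⟩
    exact sq_rot_isFactor m hm d hd
/- ### kernel words -/

lemma getLast!_eq {l : List Bool} (h : l ≠ []) : l.getLast! = l.getLast h := by
  cases l with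
  | nil => simp at h
  | cons a t => simp [List.getLast!, List.getLast?_eq_getLast h]

lemma dropLast_concat_getLast! {l : List Bool} (h : l ≠ []) :
    l.dropLast ++ [l.getLast!] = l := by
  rw [getLast!_eq h]
  exact List.dropLast_append_getLast h

lemma getLast!_two (k : ℕ) : (Fw (k+2)).getLast! = !xw k := by
  have e : Fw (k+2) = (Pw k ++ [xw k]) ++ [!xw k] := by
    rw [show Fw (k+2) = Pw k ++ [xw k, !xw k] from (swap k).1]
    simp
  rw [e, getLast!_eq (by simp), List.getLast_concat]

lemma getLast!_step : ∀ m, (Fw (m+2)).getLast! = (Fw m).getLast!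
  | 0 => by decide
  | 1 => by decide
  | (k+2) => by
      rw [getLast!_two (k+2), getLast!_two k, xw_succ, xw_succ, Bool.not_not]

lemma len_kerW (m : ℕ) : (kerW m).length = fn m := by
  have := fn_pos m
  have := len_Fw m
  simp only [kerW, List.length_cons, List.length_dropLast]
  omega

lemma kerW_ne_nil (m : ℕ) : kerW m ≠ [] := by simp [kerW]

lemma dropLast_Fw (m : ℕ) : (Fw (m+2)).dropLast = Fw (m+1) ++ (Fw m).dropLast := by
  rw [Fw_two_step]
  exact List.dropLast_append_of_ne_nil (Fw_ne_nil m)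

lemma collapse (k : ℕ) (X : List Bool) :
    (Fw k).dropLast ++ ((Fw k).getLast! :: X) = Fw k ++ X := by
  rw [show (Fw k).getLast! :: X = [(Fw k).getLast!] ++ X from rfl, ← List.append_assoc,
    dropLast_concat_getLast! (Fw_ne_nil k)]

lemma KER3 (m : ℕ) : kerW (m+3) = kerW (m+1) ++ kerW m ++ kerW (m+1) := by
  have e : kerW (m+3) = (Fw (m+2)).getLast! :: (Fw (m+1) ++ (Fw m ++ (Fw (m+1)).dropLast)) := by
    simp only [kerW]
    have g : (Fw (m+3+1)).getLast! = (Fw (m+2)).getLast! := getLast!_step (m+2)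
    rw [g]
    congr 1
    have d3 : (Fw (m+3)).dropLast = Fw (m+2) ++ (Fw (m+1)).dropLast := dropLast_Fw (m+1)
    rw [d3, Fw_two_step, List.append_assoc]
  have e' : kerW (m+1) ++ kerW m ++ kerW (m+1)
      = (Fw (m+2)).getLast! :: (Fw (m+1) ++ (Fw m ++ (Fw (m+1)).dropLast)) := by
    simp only [kerW, List.cons_append, List.append_assoc]
    congr 1
    have g2 : (Fw (m+1+1)).getLast! = (Fw m).getLast! := getLast!_step m
    rw [g2, collapse m ((Fw (m+1)).dropLast), collapse (m+1) (Fw m ++ (Fw (m+1)).dropLast)]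
  rw [e, e']

lemma CKK' (M : ℕ) : kerW (M+1) ++ kerW M = (Fw (M+2)).getLast! :: (Fw (M+2)).dropLast := by
  simp only [kerW, List.cons_append]
  congr 1
  rw [collapse (M+1) ((Fw M).dropLast)]
  exact (dropLast_Fw M).symm

lemma drop_length_sub_one {l : List Bool} (h : l ≠ []) :
    l.drop (l.length - 1) = [l.getLast!] := by
  have h2 : l = l.dropLast ++ [l.getLast!] := (dropLast_concat_getLast! h).symm
  calc l.drop (l.length - 1) = (l.dropLast ++ [l.getLast!]).drop l.dropLast.length := by
        rw [← h2, List.length_dropLast]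
      _ = [l.getLast!] := List.drop_left

lemma CKK (M : ℕ) : (Fw (M+2)).rotate (fn (M+2) - 1) = kerW (M+1) ++ kerW M := by
  have hlen : (Fw (M+2)).length = fn (M+2) := len_Fw (M+2)
  have hpos := fn_pos (M+2)
  rw [List.rotate_eq_drop_append_take (by omega), CKK']
  rw [← hlen, drop_length_sub_one (Fw_ne_nil (M+2)), ← List.dropLast_eq_take]
  rfl

lemma K_struct : ∀ M, ∃ Mid, kerW (M+2) = kerW M ++ Mid ++ kerW M ∧
    (kerW M ++ Mid).length = fn (M+1)
  | 0 => ⟨[false], by decide, by decide⟩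
  | (k+1) => by
      refine ⟨kerW k, KER3 k, ?_⟩
      rw [List.length_append, len_kerW, len_kerW]
      exact (fn_add_two k).symm
/- ### the listed words are exactly the rotations of Fw m -/

lemma sliceF_all (u : List Bool) (i L : ℕ) (hu : u.length = L) (hi : 1 ≤ i) :
    sliceF u i L = u.drop (i-1) := by
  have : (u.drop (i-1)).length = L - (i-1) := by rw [List.length_drop, hu]
  apply List.take_of_length_le
  omega

lemma sliceF_init (u : List Bool) (j : ℕ) : sliceF u 1 j = u.take j := by
  simp [sliceF]

lemma mod_shift (n v : ℕ) (h1 : n ≤ v) (h2 : v < 2*n) : v % n = v - n := by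
  rw [Nat.mod_eq_sub_mod h1, Nat.mod_eq_of_lt (by omega)]

lemma WORD1 (M i : ℕ) (h2 : 2 ≤ i) (hi : i ≤ fn (M+1)) :
    sliceF (kerW (M+1)) i (fn (M+1)) ++ kerW M ++ sliceF (kerW (M+1)) 1 (i-1)
      = (Fw (M+2)).rotate (i-2) := by
  have lC : (kerW (M+1) ++ kerW M).length = fn (M+2) := by
    rw [List.length_append, len_kerW, len_kerW, fn_add_two]
  have lK : (kerW (M+1)).length = fn (M+1) := len_kerW (M+1)
  have hn : fn (M+1) < fn (M+2) := fn_lt_succ (M+1)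
  have hR : (kerW (M+1) ++ kerW M).rotate (i-1)
      = (kerW (M+1)).drop (i-1) ++ (kerW M ++ (kerW (M+1)).take (i-1)) := by
    rw [List.rotate_eq_drop_append_take (by omega),
      List.drop_append_of_le_length (by omega),
      List.take_append_of_le_length (by omega), List.append_assoc]
  have hC : kerW (M+1) ++ kerW M = (Fw (M+2)).rotate (fn (M+2) - 1) := (CKK M).symm
  rw [sliceF_all _ _ _ lK (by omega), sliceF_init, List.append_assoc, ← hR, hC,
    List.rotate_rotate]
  rw [← List.rotate_mod _ (fn (M+2) - 1 + (i-1))]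
  congr 1
  rw [len_Fw]
  have hpos := fn_pos (M+2)
  rw [mod_shift _ _ (by omega) (by omega)]
  omega

lemma WORD2 (M i : ℕ) (h1 : fn (M+1) + 1 ≤ i) (h2 : i ≤ fn (M+2) + 1) :
    sliceF (kerW (M+2)) i (fn (M+2)) ++ kerW (M+1) ++ sliceF (kerW (M+2)) 1 (i - fn (M+1) - 1)
      = (Fw (M+2)).rotate (i-2) := by
  obtain ⟨Mid, hKS, hKSl⟩ := K_struct M
  set j := i - fn (M+1) - 1 with hj
  have hjle : j ≤ fn M := by
    have := fn_add_two M; omega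
  have lK2 : (kerW (M+2)).length = fn (M+2) := len_kerW (M+2)
  have lK : (kerW M).length = fn M := len_kerW M
  have hn : fn (M+1) < fn (M+2) := fn_lt_succ (M+1)
  have hf2 : fn (M+2) = fn (M+1) + fn M := fn_add_two M
  -- slice computations
  have s1 : sliceF (kerW (M+2)) i (fn (M+2)) = (kerW M).drop j := by
    rw [sliceF_all _ _ _ lK2 (by omega)]
    have e : i - 1 = (kerW M ++ Mid).length + j := by omega
    rw [hKS, List.append_assoc] at *
    rw [e, ← List.append_assoc, List.drop_length_add_append]
  have s2 : sliceF (kerW (M+2)) 1 j = (kerW M).take j := by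
    rw [sliceF_init, hKS, List.append_assoc, List.take_append_of_le_length (by omega)]
  rw [s1, s2]
  -- rotation computation
  have hR : (kerW (M+1) ++ kerW M).rotate (fn (M+1) + j)
      = (kerW M).drop j ++ (kerW (M+1) ++ (kerW M).take j) := by
    rw [List.rotate_eq_drop_append_take (by rw [List.length_append, len_kerW, len_kerW]; omega)]
    have e1 : fn (M+1) + j = (kerW (M+1)).length + j := by rw [len_kerW]
    rw [e1, List.drop_length_add_append, List.take_length_add_append]
  have hC : kerW (M+1) ++ kerW M = (Fw (M+2)).rotate (fn (M+2) - 1) := (CKK M).symm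
  rw [List.append_assoc, ← hR, hC, List.rotate_rotate]
  rw [← List.rotate_mod _ (fn (M+2) - 1 + (fn (M+1) + j))]
  congr 1
  rw [len_Fw]
  have hpos := fn_pos (M+2)
  have hp1 := fn_pos (M+1)
  rw [mod_shift _ _ (by omega) (by omega)]
  omega

lemma LISTEQ (M : ℕ) (w : List Bool) :
    ((∃ i, 2 ≤ i ∧ i ≤ fn (M+1) ∧
        w = sliceF (kerW (M+1)) i (fn (M+1)) ++ kerW M ++ sliceF (kerW (M+1)) 1 (i - 1)) ∨
     (∃ i, fn (M+1) + 1 ≤ i ∧ i ≤ fn (M+2) + 1 ∧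
        w = sliceF (kerW (M+2)) i (fn (M+2)) ++ kerW (M+1) ++
          sliceF (kerW (M+2)) 1 (i - fn (M+1) - 1)))
    ↔ ∃ d, d < fn (M+2) ∧ w = (Fw (M+2)).rotate d := by
  have hn : fn (M+1) < fn (M+2) := fn_lt_succ (M+1)
  have hn1 : 2 ≤ fn (M+1) := by
    have : fn 1 = 2 := by decide
    have := fn_mono (show 1 ≤ M+1 by omega)
    omega
  constructor
  · rintro (⟨i, hi1, hi2, rfl⟩ | ⟨i, hi1, hi2, rfl⟩)
    · exact ⟨i - 2, by omega, (WORD1 M i hi1 hi2).symm ▸ rfl⟩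
    · exact ⟨i - 2, by omega, (WORD2 M i hi1 hi2).symm ▸ rfl⟩
  · rintro ⟨d, hd, rfl⟩
    rcases le_or_gt (d + 2) (fn (M+1)) with h|h
    · left
      refine ⟨d + 2, by omega, h, ?_⟩
      rw [WORD1 M (d+2) (by omega) h]
      congr 1
    · right
      refine ⟨d + 2, by omega, by omega, ?_⟩
      rw [WORD2 M (d+2) (by omega) (by omega)]
      congr 1
/- ### primitivity and counting -/

lemma comm_count : ∀ (N : ℕ) (x y : List Bool), x.length + y.length ≤ N → x ++ y = y ++ x →
    x.count true * y.length = y.count true * x.length := by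
  intro N
  induction N with
  | zero =>
    intro x y h _
    have hx : x = [] := List.eq_nil_of_length_eq_zero (by omega)
    subst hx; simp
  | succ N ih =>
    intro x y hlen heq
    rcases eq_or_ne x [] with rfl|hx
    · simp
    rcases eq_or_ne y [] with rfl|hy
    · simp
    have hx1 : 1 ≤ x.length := by
      have := List.length_pos_iff.2 hx; omega
    have hy1 : 1 ≤ y.length := by
      have := List.length_pos_iff.2 hy; omega
    rcases le_or_gt x.length y.length with hle|hlt
    · have hp : x <+: y := by
        refine List.prefix_of_prefix_length_le (List.prefix_append x y) ?_ hle
        rw [heq]; exact List.prefix_append y x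
      obtain ⟨z, rfl⟩ := hp
      have heq' : x ++ z = z ++ x := by
        apply List.append_cancel_left (as := x)
        rw [heq, List.append_assoc]
      have hz := ih x z (by simp only [List.length_append] at hlen ⊢; omega) heq'
      simp only [List.count_append, List.length_append]
      rw [Nat.mul_add, hz, Nat.add_mul]
    · have hp : y <+: x := by
        refine List.prefix_of_prefix_length_le (List.prefix_append y x) ?_ (by omega)
        rw [← heq]; exact List.prefix_append x y
      obtain ⟨z, rfl⟩ := hp
      have heq' : y ++ z = z ++ y := by
        apply List.append_cancel_left (as := y)
        rw [← heq, List.append_assoc]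
      have hz := ih y z (by simp only [List.length_append] at hlen ⊢; omega) heq'
      simp only [List.count_append, List.length_append]
      rw [Nat.add_mul, ← hz, Nat.mul_add]

lemma count_Fw : ∀ m, (Fw m).count true = Nat.fib m
  | 0 => by decide
  | 1 => by decide
  | (m+2) => by
      rw [Fw_two_step, List.count_append, count_Fw (m+1), count_Fw m, Nat.fib_add_two,
        Nat.add_comm]

lemma cop_fn (m : ℕ) : Nat.Coprime (fn m) (Nat.fib m) := by
  show Nat.gcd (Nat.fib (m+2)) (Nat.fib m) = 1
  rw [Nat.fib_add_two, Nat.add_comm, Nat.gcd_add_self_left]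
  have h := Nat.fib_coprime_fib_succ m
  exact (Nat.coprime_comm.1 h)

lemma rotate_ne (m e : ℕ) (h0 : 0 < e) (he : e < fn m) : (Fw m).rotate e ≠ Fw m := by
  intro H
  set u := Fw m with hu
  have hul : u.length = fn m := len_Fw m
  set x := u.take e with hxd
  set y := u.drop e with hyd
  have hxy : x ++ y = u := List.take_append_drop e u
  have hrot : u.rotate e = y ++ x := List.rotate_eq_drop_append_take (by omega)
  have heq : x ++ y = y ++ x := by rw [hxy, ← H, hrot]
  have hc := comm_count (x.length + y.length) x y le_rfl heq
  have hxl : x.length = e := by rw [hxd, List.length_take]; omega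
  have hyl : y.length = fn m - e := by rw [hyd, List.length_drop, hul]
  have hcu : u.count true = x.count true + y.count true := by
    rw [← hxy, List.count_append]
  have hfib : u.count true = Nat.fib m := count_Fw m
  -- from hc : cx * (n - e) = cy * e, derive cx * n = (cx + cy) * e
  have key : x.count true * fn m = u.count true * e := by
    have h1 : x.count true * (fn m - e) + x.count true * e
        = y.count true * e + x.count true * e := by rw [hxl, hyl] at hc; omega
    have h2 : x.count true * (fn m - e) + x.count true * e = x.count true * fn m := by
      rw [← Nat.mul_add]
      congr 1
      omega
    rw [hcu, Nat.add_mul]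
    omega
  have hdvd : fn m ∣ e * Nat.fib m := by
    refine ⟨x.count true, ?_⟩
    rw [← hfib, Nat.mul_comm e _, ← key, Nat.mul_comm]
  have hdvd2 : fn m ∣ e := (cop_fn m).dvd_of_dvd_mul_right hdvd
  have := Nat.le_of_dvd h0 hdvd2
  omega

lemma rotate_inj (m a b : ℕ) (hab : a < b) (hb : b < fn m) :
    (Fw m).rotate a ≠ (Fw m).rotate b := by
  intro H
  have hu : (Fw m).length = fn m := len_Fw m
  have h1 : (Fw m).rotate (a + (fn m - a)) = (Fw m).rotate (b + (fn m - a)) := by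
    rw [← List.rotate_rotate, ← List.rotate_rotate, H]
  rw [show a + (fn m - a) = fn m from by omega, ← hu, List.rotate_length] at h1
  have h3 : (Fw m).rotate ((b + ((Fw m).length - a)) % (Fw m).length) = Fw m := by
    rw [List.rotate_mod]
    exact h1.symm
  rw [hu] at h3
  rw [mod_shift _ _ (by omega) (by omega)] at h3
  exact rotate_ne m (b + (fn m - a) - fn m) (by omega) (by omega) h3

/-- Characterization of the squares of length `2f_m` (`m ≥ 2`) in the Fibonacci word,
and: there are exactly `f_m` distinct squares of length `2f_m` occurring in `F`. -/
theorem squares_of_length_two_fib (m : ℕ) (hm : 2 ≤ m) :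
    (∀ w : List Bool, w.length = fn m →
      (IsFactorF (w ++ w) ↔
        (∃ i, 2 ≤ i ∧ i ≤ fn (m - 1) ∧
          w = sliceF (kerW (m - 1)) i (fn (m - 1)) ++ kerW (m - 2) ++
            sliceF (kerW (m - 1)) 1 (i - 1)) ∨
        (∃ i, fn (m - 1) + 1 ≤ i ∧ i ≤ fn m + 1 ∧
          w = sliceF (kerW m) i (fn m) ++ kerW (m - 1) ++
            sliceF (kerW m) 1 (i - fn (m - 1) - 1)))) ∧
    {w : List Bool | w.length = fn m ∧ IsFactorF (w ++ w)}.ncard = fn m := by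
  obtain ⟨M, rfl⟩ : ∃ M, m = M + 2 := ⟨m - 2, by omega⟩
  have e1 : M + 2 - 1 = M + 1 := by omega
  have e2 : M + 2 - 2 = M := by omega
  constructor
  · intro w hw
    rw [rot_char (M+2) (by omega) w hw, e1, e2]
    exact (LISTEQ M w).symm
  · have hset : {w : List Bool | w.length = fn (M+2) ∧ IsFactorF (w ++ w)}
        = ↑((Finset.range (fn (M+2))).image fun d => (Fw (M+2)).rotate d) := by
      ext w
      simp only [Set.mem_setOf_eq, Finset.coe_image, Set.mem_image, Finset.mem_coe,
        Finset.mem_range]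
      constructor
      · rintro ⟨hl, hf⟩
        obtain ⟨d, hd, rfl⟩ := (rot_char (M+2) (by omega) w hl).1 hf
        exact ⟨d, hd, rfl⟩
      · rintro ⟨d, hd, rfl⟩
        have hl : ((Fw (M+2)).rotate d).length = fn (M+2) := by
          rw [List.length_rotate, len_Fw]
        exact ⟨hl, (rot_char (M+2) (by omega) _ hl).2 ⟨d, hd, rfl⟩⟩
    rw [hset, Set.ncard_coe_finset, Finset.card_image_of_injOn, Finset.card_range]
    intro a ha b hb hab
    simp only [Finset.coe_range, Set.mem_Iio] at ha hb
    by_contra hne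
    rcases lt_or_gt_of_ne hne with h|h
    · exact rotate_inj (M+2) a b h hb hab
    · exact rotate_inj (M+2) b a h ha hab.symm
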